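/- Let q be a real number with 0 < q < 1, and for each m ∈ ℕ set σ_m := ∑_{k=0}^{m} binom_q(m,k)·(−1)^{m−k} (that is, σ_m = (1 ⊖_q 1)^m). Then for every complex x with |x| < 1/(1−q), the series cos_q(x(1 ⊖_q 1)) := ∑_{n=0}^{∞} (−1)^n σ_{2n} x^{2n}/[2n]_q! converges and cos_q(x)² + sin_q(x)² = cos_q(x(1 ⊖_q 1)). -/

import Mathlib

open Filter Topology

/-- The `q`-basic number `[n]_q = (1 - q^n)/(1 - q)`. -/
noncomputable def qNum (q : ℝ) (n : ℕ) : ℝ := (1 - q ^ n) / (1 - q)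

/-- The `q`-factorial `[n]_q! = [1]_q [2]_q ⋯ [n]_q`, with `[0]_q! = 1`. -/
noncomputable def qFact (q : ℝ) (n : ℕ) : ℝ := ∏ j ∈ Finset.range n, qNum q (j + 1)

/-- The Gaussian binomial coefficient `[n]_q! / ([k]_q! [n-k]_q!)`. -/
noncomputable def qBinom (q : ℝ) (n k : ℕ) : ℝ := qFact q n / (qFact q k * qFact q (n - k))

/-- The `q`-exponential `e_q(z) = ∑ z^n / [n]_q!`. -/
noncomputable def qExp (q : ℝ) (z : ℂ) : ℂ := ∑' n : ℕ, z ^ n / (qFact q n : ℂ)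

/-- The `q`-sine `sin_q(z) = ∑ (-1)^n z^(2n+1) / [2n+1]_q!`. -/
noncomputable def qSin (q : ℝ) (z : ℂ) : ℂ :=
  ∑' n : ℕ, (-1 : ℂ) ^ n * z ^ (2 * n + 1) / (qFact q (2 * n + 1) : ℂ)

/-- The `q`-cosine `cos_q(z) = ∑ (-1)^n z^(2n) / [2n]_q!`. -/
noncomputable def qCos (q : ℝ) (z : ℂ) : ℂ :=
  ∑' n : ℕ, (-1 : ℂ) ^ n * z ^ (2 * n) / (qFact q (2 * n) : ℂ)

/-- The `q`-addition power `(x ⊕_q y)^n = ∑_{k=0}^n binom_q(n,k) x^k y^(n-k)`. -/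
noncomputable def qAddPow (q : ℝ) (x y : ℂ) (n : ℕ) : ℂ :=
  ∑ k ∈ Finset.range (n + 1), (qBinom q n k : ℂ) * x ^ k * y ^ (n - k)

/-- The `q`-subtraction power `(x ⊖_q y)^n = ∑_{k=0}^n binom_q(n,k) (-1)^(n-k) x^k y^(n-k)`. -/
noncomputable def qSubPow (q : ℝ) (x y : ℂ) (n : ℕ) : ℂ :=
  ∑ k ∈ Finset.range (n + 1), (qBinom q n k : ℂ) * (-1 : ℂ) ^ (n - k) * x ^ k * y ^ (n - k)

/-- The `q`-tangent `tan_q(z) = sin_q(z)/cos_q(z)`. -/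
noncomputable def qTan (q : ℝ) (z : ℂ) : ℂ := qSin q z / qCos q z

/-- The second `q`-exponential `E_q(z) = ∑ q^(n(n-1)/2) z^n / [n]_q!`. -/
noncomputable def qExpE (q : ℝ) (z : ℂ) : ℂ :=
  ∑' n : ℕ, (q : ℂ) ^ (n * (n - 1) / 2) * z ^ n / (qFact q n : ℂ)

section aux
variable {q : ℝ}

lemma qNum_pos (hq0 : 0 < q) (hq1 : q < 1) (n : ℕ) : 0 < qNum q (n + 1) := by
  have h1 : q ^ (n + 1) < 1 := pow_lt_one₀ hq0.le hq1 (Nat.succ_ne_zero n)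
  exact div_pos (by linarith) (by linarith)

lemma qFact_pos (hq0 : 0 < q) (hq1 : q < 1) (n : ℕ) : 0 < qFact q n :=
  Finset.prod_pos fun j _ => qNum_pos hq0 hq1 j

lemma qFact_succ (n : ℕ) : qFact q (n + 1) = qFact q n * qNum q (n + 1) :=
  Finset.prod_range_succ _ _

lemma qNum_tendsto (hq0 : 0 < q) (hq1 : q < 1) :
    Tendsto (fun m : ℕ => qNum q m) atTop (𝓝 (1 / (1 - q))) := by
  have h : Tendsto (fun m : ℕ => q ^ m) atTop (𝓝 0) :=
    tendsto_pow_atTop_nhds_zero_of_lt_one hq0.le hq1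
  have := (tendsto_const_nhds (x := (1 : ℝ)) (f := atTop)).sub h
  simpa [qNum, div_eq_mul_inv, sub_zero] using this.mul tendsto_const_nhds

lemma qSummable (hq0 : 0 < q) (hq1 : q < 1) (x : ℂ) (hx : ‖x‖ < 1 / (1 - q)) (c : ℕ) :
    Summable (fun n : ℕ => ‖x‖ ^ (2 * n + c) / qFact q (2 * n + c)) := by
  have hq' : 0 < 1 - q := by linarith
  set a := ‖x‖ * (1 - q) with ha
  have ha1 : a < 1 := by rw [ha, ← lt_div_iff₀ hq']; exact hx
  have ha0 : 0 ≤ a := mul_nonneg (norm_nonneg x) hq'.le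
  set r := (a ^ 2 + 1) / 2 with hr
  have hr1 : r < 1 := by rw [hr]; nlinarith
  have hra : a ^ 2 < r := by rw [hr]; nlinarith
  have hr0 : 0 < r := by rw [hr]; nlinarith
  apply summable_of_ratio_norm_eventually_le hr1
  have hmono : ∀ d : ℕ, Tendsto (fun n : ℕ => qNum q (2 * n + c + d)) atTop (𝓝 (1 / (1 - q))) := by
    intro d
    apply (qNum_tendsto hq0 hq1).comp
    exact tendsto_atTop_atTop.2 fun b => ⟨b, fun m hm => by omega⟩
  have hT : Tendsto (fun n : ℕ => r * (qNum q (2 * n + c + 1) * qNum q (2 * n + c + 2))) atTop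
      (𝓝 (r * (1 / (1 - q) * (1 / (1 - q))))) :=
    tendsto_const_nhds.mul ((hmono 1).mul (hmono 2))
  have hlim : ‖x‖ ^ 2 < r * (1 / (1 - q) * (1 / (1 - q))) := by
    have h2 : a ^ 2 = ‖x‖ ^ 2 * (1 - q) ^ 2 := by rw [ha]; ring
    rw [div_mul_div_comm, one_mul, mul_one_div, lt_div_iff₀ (by positivity)]
    nlinarith [h2]
  filter_upwards [hT.eventually (eventually_gt_nhds hlim)] with n hn
  have hN1 : 0 < qNum q (2 * n + c + 1) := qNum_pos hq0 hq1 _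
  have hN2 : 0 < qNum q (2 * n + c + 2) := by
    have := qNum_pos hq0 hq1 (2 * n + c + 1); simpa [Nat.add_assoc] using this
  have hFp := qFact_pos hq0 hq1 (2 * n + c)
  rw [Real.norm_of_nonneg (div_nonneg (by positivity) (qFact_pos hq0 hq1 _).le),
    Real.norm_of_nonneg (div_nonneg (by positivity) (qFact_pos hq0 hq1 _).le)]
  have key : qFact q (2 * (n + 1) + c)
      = qFact q (2 * n + c) * (qNum q (2 * n + c + 1) * qNum q (2 * n + c + 2)) := by
    have h : 2 * (n + 1) + c = (2 * n + c + 1) + 1 := by omega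
    rw [h, qFact_succ, qFact_succ]; ring_nf
  have hx2 : ‖x‖ ^ (2 * (n + 1) + c)
      = ‖x‖ ^ (2 * n + c) * ‖x‖ ^ 2 := by
    rw [← pow_add]; congr 1; omega
  rw [key, hx2, mul_div_mul_comm]
  calc ‖x‖ ^ (2 * n + c) / qFact q (2 * n + c)
        * (‖x‖ ^ 2 / (qNum q (2 * n + c + 1) * qNum q (2 * n + c + 2)))
      ≤ ‖x‖ ^ (2 * n + c) / qFact q (2 * n + c) * r := by
        apply mul_le_mul_of_nonneg_left _ (by positivity)
        rw [div_le_iff₀ (by positivity)]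
        calc ‖x‖ ^ 2 ≤ r * (qNum q (2*n+c+1) * qNum q (2*n+c+2)) := hn.le
        _ = r * (qNum q (2*n+c+1) * qNum q (2*n+c+2)) := rfl
    _ = r * (‖x‖ ^ (2 * n + c) / qFact q (2 * n + c)) := mul_comm _ _

lemma sum_even_odd (a : ℕ → ℂ) : ∀ m : ℕ, ∑ k ∈ Finset.range (2 * m + 1), a k
    = ∑ i ∈ Finset.range (m + 1), a (2 * i) + ∑ i ∈ Finset.range m, a (2 * i + 1)
  | 0 => by simp
  | (m + 1) => by
    have h : 2 * (m + 1) + 1 = (2 * m + 1) + 1 + 1 := by ring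
    rw [h, Finset.sum_range_succ, Finset.sum_range_succ, sum_even_odd a m,
      Finset.sum_range_succ (fun i => a (2 * i)) (m + 1),
      Finset.sum_range_succ (fun i => a (2 * i + 1)) m]
    have h2 : 2 * (m + 1) = 2 * m + 1 + 1 := by ring
    rw [h2]; ring

end aux

/-- `cos_q(x)² + sin_q(x)² = cos_q(x (1 ⊖_q 1))`, where the right-hand series is
`∑ (-1)^n (1 ⊖_q 1)^{2n} x^{2n} / [2n]_q!`. -/
theorem qCos_sq_add_qSin_sq (q : ℝ) (hq0 : 0 < q) (hq1 : q < 1) (x : ℂ)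
    (hx : ‖x‖ < 1 / (1 - q)) :
    HasSum
      (fun n : ℕ => (-1 : ℂ) ^ n * qSubPow q 1 1 (2 * n) * x ^ (2 * n) / (qFact q (2 * n) : ℂ))
      (qCos q x ^ 2 + qSin q x ^ 2) := by
  have hF : ∀ m : ℕ, (qFact q m : ℂ) ≠ 0 := fun m =>
    Complex.ofReal_ne_zero.2 (qFact_pos hq0 hq1 m).ne'
  set f : ℕ → ℂ := fun n => (-1 : ℂ) ^ n * x ^ (2 * n) / (qFact q (2 * n) : ℂ) with hfdef
  set g : ℕ → ℂ := fun n => (-1 : ℂ) ^ n * x ^ (2 * n + 1) / (qFact q (2 * n + 1) : ℂ) with hgdef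
  have hnorm : ∀ (c : ℕ) (h : ℕ → ℂ),
      (∀ n, h n = (-1 : ℂ) ^ n * x ^ (2 * n + c) / (qFact q (2 * n + c) : ℂ)) →
      ∀ n, ‖h n‖ = ‖x‖ ^ (2 * n + c) / qFact q (2 * n + c) := by
    intro c h hh n
    rw [hh n]
    simp [map_div₀, map_mul, map_pow,
      Complex.norm_real, abs_of_pos (qFact_pos hq0 hq1 _)]
  have hfs : Summable fun n => ‖f n‖ := by
    refine (qSummable hq0 hq1 x hx 0).congr fun n => ?_
    rw [hnorm 0 f (fun n => by simp [hfdef]) n]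
  have hgs : Summable fun n => ‖g n‖ := by
    refine (qSummable hq0 hq1 x hx 1).congr fun n => ?_
    rw [hnorm 1 g (fun n => rfl) n]
  have hcos : HasSum (fun n => ∑ k ∈ Finset.range (n + 1), f k * f (n - k)) (qCos q x ^ 2) := by
    have h := hasSum_sum_range_mul_of_summable_norm hfs hfs
    rw [qCos, sq]; exact h
  have hsin : HasSum (fun n => ∑ k ∈ Finset.range (n + 1), g k * g (n - k)) (qSin q x ^ 2) := by
    have h := hasSum_sum_range_mul_of_summable_norm hgs hgs
    rw [qSin, sq]; exact h
  set T : ℕ → ℂ := fun n => match n with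
    | 0 => 0
    | (m + 1) => ∑ k ∈ Finset.range (m + 1), g k * g (m - k) with hTdef
  have hT : HasSum T (qSin q x ^ 2) := by
    have h2 : HasSum (fun n => T (n + 1)) (qSin q x ^ 2) := hsin
    have := (hasSum_nat_add_iff (f := T) 1).mp h2
    simpa [show T 0 = 0 from rfl] using this
  have htot := hcos.add hT
  have key : ∀ n : ℕ, (-1 : ℂ) ^ n * qSubPow q 1 1 (2 * n) * x ^ (2 * n) / (qFact q (2 * n) : ℂ)
      = (∑ k ∈ Finset.range (n + 1), f k * f (n - k)) + T n := by
    intro n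
    match n with
    | 0 => simp [qSubPow, qBinom, qFact, hfdef, hTdef]
    | (n + 1) =>
      show _ = _ + ∑ k ∈ Finset.range (n + 1), g k * g (n - k)
      have hσ : qSubPow q 1 1 (2 * (n + 1))
          = ∑ k ∈ Finset.range (2 * (n + 1) + 1), (qBinom q (2 * (n + 1)) k : ℂ) * (-1) ^ k := by
        unfold qSubPow
        refine Finset.sum_congr rfl fun k hk => ?_
        have hk' : k ≤ 2 * (n + 1) := by
          have := Finset.mem_range.mp hk; omega
        have hpow : ((-1 : ℂ)) ^ (2 * (n + 1) - k) = (-1) ^ k := by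
          have h1 : ((-1 : ℂ)) ^ (2 * (n + 1) - k) * (-1) ^ k = (-1) ^ (2 * (n + 1)) := by
            rw [← pow_add, Nat.sub_add_cancel hk']
          have h2 : ((-1 : ℂ)) ^ (2 * (n + 1)) = 1 := by rw [pow_mul]; norm_num
          have h3 : ((-1 : ℂ)) ^ k * (-1) ^ k = 1 := by rw [← mul_pow]; norm_num
          calc ((-1 : ℂ)) ^ (2 * (n + 1) - k)
              = ((-1 : ℂ)) ^ (2 * (n + 1) - k) * ((-1) ^ k * (-1) ^ k) := by rw [h3, mul_one]
            _ = (((-1 : ℂ)) ^ (2 * (n + 1) - k) * (-1) ^ k) * (-1) ^ k := by ring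
            _ = (-1 : ℂ) ^ k := by rw [h1, h2, one_mul]
        rw [hpow, one_pow, one_pow]; ring
      have h1 : ∀ i : ℕ, ((-1 : ℂ)) ^ (2 * i) = 1 := fun i => by rw [pow_mul]; norm_num
      have h2 : ∀ i : ℕ, ((-1 : ℂ)) ^ (2 * i + 1) = -1 := fun i => by
        rw [pow_succ, h1]; norm_num
      rw [hσ, sum_even_odd _ (n + 1)]
      simp only [h1, h2, mul_one, mul_neg_one]
      rw [mul_add, add_mul, add_div]
      congr 1
      · rw [Finset.mul_sum, Finset.sum_mul, Finset.sum_div]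
        refine Finset.sum_congr rfl fun i hi => ?_
        have hi' : i ≤ n + 1 := by have := Finset.mem_range.mp hi; omega
        have hsub : 2 * (n + 1) - 2 * i = 2 * (n + 1 - i) := by omega
        have bin : (qBinom q (2 * (n + 1)) (2 * i) : ℂ)
            = (qFact q (2 * (n + 1)) : ℂ)
              / ((qFact q (2 * i) : ℂ) * (qFact q (2 * (n + 1 - i)) : ℂ)) := by
          rw [qBinom, hsub]; push_cast; ring
        have hp1 : ((-1 : ℂ)) ^ (n + 1) = (-1) ^ i * (-1) ^ (n + 1 - i) := by
          rw [← pow_add]; congr 1; omega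
        have hp2 : x ^ (2 * (n + 1)) = x ^ (2 * i) * x ^ (2 * (n + 1 - i)) := by
          rw [← pow_add]; congr 1; omega
        show _ = f i * f (n + 1 - i)
        simp only [hfdef]
        rw [bin, hp1, hp2]
        field_simp [hF]
      · rw [Finset.mul_sum, Finset.sum_mul, Finset.sum_div]
        refine Finset.sum_congr rfl fun i hi => ?_
        have hi' : i ≤ n := by have := Finset.mem_range.mp hi; omega
        have hsub : 2 * (n + 1) - (2 * i + 1) = 2 * (n - i) + 1 := by omega
        have bin : (qBinom q (2 * (n + 1)) (2 * i + 1) : ℂ)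
            = (qFact q (2 * (n + 1)) : ℂ)
              / ((qFact q (2 * i + 1) : ℂ) * (qFact q (2 * (n - i) + 1) : ℂ)) := by
          rw [qBinom, hsub]; push_cast; ring
        have hp1 : ((-1 : ℂ)) ^ (n + 1) = -((-1) ^ i * (-1) ^ (n - i)) := by
          rw [← pow_add, show i + (n - i) = n from by omega, pow_succ]; ring
        have hp2 : x ^ (2 * (n + 1)) = x ^ (2 * i + 1) * x ^ (2 * (n - i) + 1) := by
          rw [← pow_add]; congr 1; omega
        show _ = g i * g (n - i)
        simp only [hgdef]
        rw [bin, hp1, hp2]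
        field_simp [hF]
  have hfun : (fun n : ℕ => (-1 : ℂ) ^ n * qSubPow q 1 1 (2 * n) * x ^ (2 * n)
      / (qFact q (2 * n) : ℂ))
      = fun b => (∑ k ∈ Finset.range (b + 1), f k * f (b - k)) + T b := funext key
  rw [hfun]; exact htot
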